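/- If K ⊆ ℝ^d is a closed convex pointed cone (K ∩ (−K) ⊆ {0}), then the set K \ {0} is Capra-convex, for any choice of source norm. -/

import Mathlib

open Classical in
noncomputable def radProj {d : ℕ} (N : EuclideanSpace ℝ (Fin d) → ℝ)
    (x : EuclideanSpace ℝ (Fin d)) : EuclideanSpace ℝ (Fin d) :=
  if x = 0 then 0 else (N x)⁻¹ • x

noncomputable def capraConj {d : ℕ} (N : EuclideanSpace ℝ (Fin d) → ℝ)
    (f : EuclideanSpace ℝ (Fin d) → EReal) (y : EuclideanSpace ℝ (Fin d)) : EReal :=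
  ⨆ x : EuclideanSpace ℝ (Fin d), ((inner ℝ (radProj N x) y : ℝ) : EReal) - f x

noncomputable def capraBiconj {d : ℕ} (N : EuclideanSpace ℝ (Fin d) → ℝ)
    (f : EuclideanSpace ℝ (Fin d) → EReal) (x : EuclideanSpace ℝ (Fin d)) : EReal :=
  ⨆ y : EuclideanSpace ℝ (Fin d), ((inner ℝ (radProj N x) y : ℝ) : EReal) - capraConj N f y

open Classical in
noncomputable def ind {d : ℕ} (X : Set (EuclideanSpace ℝ (Fin d)))
    (x : EuclideanSpace ℝ (Fin d)) : EReal :=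
  if x ∈ X then 0 else ⊤

def IsCapraConvex {d : ℕ} (N : EuclideanSpace ℝ (Fin d) → ℝ)
    (X : Set (EuclideanSpace ℝ (Fin d))) : Prop :=
  ind X = capraBiconj N (ind X)

def coneHull {d : ℕ} (A : Set (EuclideanSpace ℝ (Fin d))) : Set (EuclideanSpace ℝ (Fin d)) :=
  {y | ∃ a ∈ A, ∃ l : ℝ, 0 < l ∧ y = l • a}

open Function Filter RealInnerProductSpace

section AuxLemmas

variable {d : ℕ} {N : EuclideanSpace ℝ (Fin d) → ℝ}

lemma auxN_nonneg (hN0 : ∀ x : EuclideanSpace ℝ (Fin d), N x = 0 ↔ x = 0)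
    (hNh : ∀ (a : ℝ) (x : EuclideanSpace ℝ (Fin d)), N (a • x) = |a| * N x)
    (hNt : ∀ x y : EuclideanSpace ℝ (Fin d), N (x + y) ≤ N x + N y)
    (x : EuclideanSpace ℝ (Fin d)) : 0 ≤ N x := by
  have h := hNt x ((-1 : ℝ) • x)
  rw [hNh] at h
  have hx : x + (-1 : ℝ) • x = 0 := by simp
  rw [hx, (hN0 0).2 rfl] at h
  simp at h
  linarith

lemma auxN_sum (hN0 : ∀ x : EuclideanSpace ℝ (Fin d), N x = 0 ↔ x = 0)
    (hNt : ∀ x y : EuclideanSpace ℝ (Fin d), N (x + y) ≤ N x + N y)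
    {ι : Type*} (s : Finset ι) (f : ι → EuclideanSpace ℝ (Fin d)) :
    N (∑ i ∈ s, f i) ≤ ∑ i ∈ s, N (f i) := by
  induction s using Finset.cons_induction with
  | empty => simp [(hN0 0).2 rfl]
  | cons a s ha ih =>
    rw [Finset.sum_cons, Finset.sum_cons]
    exact le_trans (hNt _ _) (by linarith)

lemma auxN_le (hN0 : ∀ x : EuclideanSpace ℝ (Fin d), N x = 0 ↔ x = 0)
    (hNh : ∀ (a : ℝ) (x : EuclideanSpace ℝ (Fin d)), N (a • x) = |a| * N x)
    (hNt : ∀ x y : EuclideanSpace ℝ (Fin d), N (x + y) ≤ N x + N y)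
    (x : EuclideanSpace ℝ (Fin d)) :
    N x ≤ (∑ i, N (EuclideanSpace.single i (1:ℝ))) * ‖x‖ := by
  have hx : ∑ i, x i • EuclideanSpace.single i (1:ℝ) = x := by
    have h := (EuclideanSpace.basisFun (Fin d) ℝ).sum_repr x
    simpa [EuclideanSpace.basisFun_apply, EuclideanSpace.basisFun_repr] using h
  calc N x = N (∑ i, x i • EuclideanSpace.single i (1:ℝ)) := by rw [hx]
    _ ≤ ∑ i, N (x i • EuclideanSpace.single i (1:ℝ)) := auxN_sum hN0 hNt _ _
    _ = ∑ i, |x i| * N (EuclideanSpace.single i (1:ℝ)) := by simp [hNh]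
    _ ≤ ∑ i, ‖x‖ * N (EuclideanSpace.single i (1:ℝ)) := by
        apply Finset.sum_le_sum
        intro i _
        apply mul_le_mul_of_nonneg_right _ (auxN_nonneg hN0 hNh hNt _)
        rw [EuclideanSpace.norm_eq]
        have h1 : |x i| = Real.sqrt (‖x i‖^2) := by
          rw [Real.norm_eq_abs, Real.sqrt_sq_eq_abs, abs_abs]
        rw [h1]
        apply Real.sqrt_le_sqrt
        exact Finset.single_le_sum (f := fun j => ‖x j‖ ^ 2) (fun j _ => sq_nonneg _)
          (Finset.mem_univ i)
    _ = (∑ i, N (EuclideanSpace.single i (1:ℝ))) * ‖x‖ := by rw [← Finset.mul_sum, mul_comm]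

lemma auxN_cont (hN0 : ∀ x : EuclideanSpace ℝ (Fin d), N x = 0 ↔ x = 0)
    (hNh : ∀ (a : ℝ) (x : EuclideanSpace ℝ (Fin d)), N (a • x) = |a| * N x)
    (hNt : ∀ x y : EuclideanSpace ℝ (Fin d), N (x + y) ≤ N x + N y) :
    Continuous N := by
  set C := ∑ i, N (EuclideanSpace.single i (1:ℝ)) with hC
  have habs : ∀ x y, |N x - N y| ≤ N (x - y) := by
    intro x y
    rw [abs_le]
    constructor
    · have := hNt y (x - y)
      have h2 : N (y - x) = N (x - y) := by
        have : y - x = (-1 : ℝ) • (x - y) := by simp [smul_sub]; abel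
        rw [this, hNh]; simp
      have := hNt x (y - x)
      rw [h2] at this
      simp at this ⊢
      linarith
    · have := hNt y (x - y)
      simp at this
      linarith
  apply (LipschitzWith.of_dist_le_mul (K := C.toNNReal) (f := N) ?_).continuous
  intro x y
  rw [Real.dist_eq, dist_eq_norm]
  calc |N x - N y| ≤ N (x - y) := habs x y
    _ ≤ C * ‖x - y‖ := auxN_le hN0 hNh hNt _
    _ ≤ C.toNNReal * ‖x - y‖ := by
        apply mul_le_mul_of_nonneg_right (Real.le_coe_toNNReal C) (norm_nonneg _)

end AuxLemmas

theorem stmt {d : ℕ} (N : EuclideanSpace ℝ (Fin d) → ℝ)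
    (hN0 : ∀ x : EuclideanSpace ℝ (Fin d), N x = 0 ↔ x = 0)
    (hNh : ∀ (a : ℝ) (x : EuclideanSpace ℝ (Fin d)), N (a • x) = |a| * N x)
    (hNt : ∀ x y : EuclideanSpace ℝ (Fin d), N (x + y) ≤ N x + N y)
    (K : Set (EuclideanSpace ℝ (Fin d))) (hKc : IsClosed K) (hKconv : Convex ℝ K)
    (hK : ∀ l : ℝ, 0 < l → ∀ x ∈ K, l • x ∈ K)
    (hptd : K ∩ (-K) ⊆ {0}) :
    IsCapraConvex N (K \ {0}) := by
  classical
  set S : Set (EuclideanSpace ℝ (Fin d)) := K \ {0} with hSdef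
  have hNpos : ∀ z : EuclideanSpace ℝ (Fin d), z ≠ 0 → 0 < N z := by
    intro z hz
    rcases lt_or_eq_of_le (auxN_nonneg hN0 hNh hNt z) with h | h
    · exact h
    · exact absurd ((hN0 z).1 h.symm) hz
  -- radial projection of elements of S lies in K with N = 1
  have hρS : ∀ z ∈ S, radProj N z ∈ K ∧ N (radProj N z) = 1 := by
    intro z hz
    have hz0 : z ≠ 0 := hz.2
    have hNz : 0 < N z := hNpos z hz0
    rw [radProj, if_neg hz0]
    refine ⟨hK _ (inv_pos.2 hNz) _ hz.1, ?_⟩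
    rw [hNh, abs_of_pos (inv_pos.2 hNz), inv_mul_cancel₀ (ne_of_gt hNz)]
  unfold IsCapraConvex
  funext x
  by_cases hxS : x ∈ S
  · -- on S both sides are 0
    have hind : ind S x = 0 := if_pos hxS
    rw [hind]
    apply le_antisymm
    · -- 0 ≤ biconj
      have hc0 : capraConj N (ind S) 0 ≤ 0 := by
        apply iSup_le
        intro z
        by_cases hz : z ∈ S
        · simp [ind, hz, inner_zero_right]
        · simp [ind, hz, EReal.sub_top]
      have h2 : ((0:ℝ):EReal) - (0:EReal) ≤
          ((inner ℝ (radProj N x) (0:EuclideanSpace ℝ (Fin d)) : ℝ) : EReal) -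
            capraConj N (ind S) 0 := by
        apply EReal.sub_le_sub _ hc0
        simp [inner_zero_right]
      have h3 : ((0:ℝ):EReal) - (0:EReal) = 0 := by
        norm_num
      rw [h3] at h2
      rw [capraBiconj]
      exact le_trans h2 (le_iSup (fun y => ((inner ℝ (radProj N x) y : ℝ) : EReal) -
        capraConj N (ind S) y) 0)
    · -- biconj ≤ 0
      rw [capraBiconj]
      apply iSup_le
      intro y
      have h1 : ((inner ℝ (radProj N x) y : ℝ) : EReal) ≤ capraConj N (ind S) y := by
        have := le_iSup (fun z => ((inner ℝ (radProj N z) y : ℝ) : EReal) - ind S z) x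
        rwa [hind, sub_zero] at this
      calc ((inner ℝ (radProj N x) y : ℝ) : EReal) - capraConj N (ind S) y
          ≤ ((inner ℝ (radProj N x) y : ℝ) : EReal) - ((inner ℝ (radProj N x) y : ℝ) : EReal) :=
            EReal.sub_le_sub le_rfl h1
        _ = 0 := by rw [← EReal.coe_sub]; norm_num
  · -- off S, both sides are ⊤
    have hind : ind S x = ⊤ := if_neg hxS
    rw [hind]
    rcases Set.eq_empty_or_nonempty S with hSe | hSne
    · -- S empty: conj ≡ ⊥, biconj ≡ ⊤
      have hindall : ∀ z, ind S z = ⊤ := by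
        intro z; rw [ind, if_neg]; rw [hSe]; exact Set.notMem_empty z
      have hconj : ∀ y, capraConj N (ind S) y = ⊥ := by
        intro y
        rw [capraConj]
        have : ∀ z : EuclideanSpace ℝ (Fin d),
            ((inner ℝ (radProj N z) y : ℝ) : EReal) - ind S z = ⊥ := by
          intro z
          rw [hindall z, EReal.sub_top]
        simp only [this, iSup_bot]
      rw [capraBiconj]
      symm
      rw [eq_top_iff]
      refine le_trans ?_ (le_iSup _ 0)
      rw [hconj, EReal.coe_sub_bot]
    · -- S nonempty: the geometric case
      obtain ⟨x₀, hx₀S⟩ := hSne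
      have hx₀0 : x₀ ≠ 0 := hx₀S.2
      -- 0 ∈ K
      have h0K : (0 : EuclideanSpace ℝ (Fin d)) ∈ K := by
        have htend : Tendsto (fun n : ℕ => (1/((n:ℝ)+1)) • x₀) atTop (nhds 0) := by
          have h := tendsto_one_div_add_atTop_nhds_zero_nat (𝕜 := ℝ)
          have := h.smul_const x₀
          simpa using this
        exact hKc.mem_of_tendsto htend (Eventually.of_forall fun n =>
          hK _ (by positivity) _ hx₀S.1)
      -- K is closed under addition
      have hKadd : ∀ u ∈ K, ∀ v ∈ K, u + v ∈ K := by
        intro u hu v hv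
        have hmid : (1/2 : ℝ) • u + (1/2 : ℝ) • v ∈ K := by
          apply hKconv hu hv <;> norm_num
        have := hK 2 (by norm_num) _ hmid
        rw [smul_add, smul_smul, smul_smul] at this
        norm_num at this
        exact this
      have hKsmul : ∀ (t : ℝ), 0 ≤ t → ∀ u ∈ K, t • u ∈ K := by
        intro t ht u hu
        rcases eq_or_lt_of_le ht with h | h
        · rw [← h, zero_smul]; exact h0K
        · exact hK t h u hu
      -- lower bound for N
      haveI : Nontrivial (EuclideanSpace ℝ (Fin d)) := nontrivial_of_ne x₀ 0 hx₀0
      obtain ⟨z₀, hz₀s, hz₀min⟩ := (isCompact_sphere (0 : EuclideanSpace ℝ (Fin d)) 1).exists_isMinOn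
        (NormedSpace.sphere_nonempty.2 zero_le_one) (auxN_cont hN0 hNh hNt).continuousOn
      have hz₀norm : ‖z₀‖ = 1 := by simpa using hz₀s
      have hz₀0 : z₀ ≠ 0 := by intro h; rw [h] at hz₀norm; simp at hz₀norm
      set c : ℝ := N z₀ with hc
      have hcpos : 0 < c := hNpos z₀ hz₀0
      have hlow : ∀ u : EuclideanSpace ℝ (Fin d), c * ‖u‖ ≤ N u := by
        intro u
        rcases eq_or_ne u 0 with h | h
        · simp [h, (hN0 0).2 rfl]
        · have hn : ‖u‖ ≠ 0 := norm_ne_zero_iff.2 h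
          have hmem : ‖u‖⁻¹ • u ∈ Metric.sphere (0 : EuclideanSpace ℝ (Fin d)) 1 := by
            simp [norm_smul, abs_of_pos (inv_pos.2 (norm_pos_iff.2 h)),
              inv_mul_cancel₀ hn]
          have hle : N z₀ ≤ N (‖u‖⁻¹ • u) := hz₀min hmem
          have h2 : N (‖u‖⁻¹ • u) = ‖u‖⁻¹ * N u := by
            rw [hNh, abs_of_pos (inv_pos.2 (norm_pos_iff.2 h))]
          rw [h2] at hle
          have h3 : c * ‖u‖ ≤ (‖u‖⁻¹ * N u) * ‖u‖ :=
            mul_le_mul_of_nonneg_right hle (norm_nonneg _)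
          rwa [mul_comm (‖u‖⁻¹) (N u), mul_assoc, inv_mul_cancel₀ hn, mul_one] at h3
      -- the base B
      set B : Set (EuclideanSpace ℝ (Fin d)) := {u : EuclideanSpace ℝ (Fin d) | u ∈ K ∧ N u = 1} with hBdef
      have hBK : B ⊆ K := fun u hu => hu.1
      have hb₀ : radProj N x₀ ∈ B := ⟨(hρS x₀ hx₀S).1, (hρS x₀ hx₀S).2⟩
      have hBcpt : IsCompact B := by
        apply Metric.isCompact_of_isClosed_isBounded
        · exact hKc.inter (isClosed_eq (auxN_cont hN0 hNh hNt) continuous_const)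
        · rw [Metric.isBounded_iff_subset_closedBall 0]
          refine ⟨c⁻¹, fun u hu => ?_⟩
          have h1 := hlow u
          rw [hu.2] at h1
          rw [Metric.mem_closedBall, dist_zero_right]
          have h2 : ‖u‖ ≤ 1 / c := (le_div_iff₀ hcpos).2 (by linarith)
          rwa [one_div] at h2
      -- compact superset of the convex hull of B
      set A : Set ((Fin (d+1) → ℝ) × (Fin (d+1) → EuclideanSpace ℝ (Fin d))) :=
        stdSimplex ℝ (Fin (d+1)) ×ˢ Set.univ.pi (fun _ => B) with hAdef
      have hAcpt : IsCompact A :=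
        (isCompact_stdSimplex (𝕜 := ℝ) (ι := Fin (d+1))).prod (isCompact_univ_pi fun _ => hBcpt)
      set φ : (Fin (d+1) → ℝ) × (Fin (d+1) → EuclideanSpace ℝ (Fin d)) →
          EuclideanSpace ℝ (Fin d) := fun p => ∑ i, p.1 i • p.2 i with hφdef
      have hφcont : Continuous φ := by
        apply continuous_finset_sum
        intro i _
        exact ((continuous_apply i).comp continuous_fst).smul
          ((continuous_apply i).comp continuous_snd)
      have himg : IsCompact (φ '' A) := hAcpt.image hφcont
      have hhull : convexHull ℝ B ⊆ φ '' A := by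
        intro p hp
        obtain ⟨ι, hι, z, w, hzB, hai, hwpos, hwsum, hrepr⟩ :=
          eq_pos_convex_span_of_mem_convexHull hp
        letI := hι
        have hcard : Fintype.card ι ≤ d + 1 := by
          have h1 := hai.card_le_finrank_succ
          have h2 := Submodule.finrank_le (vectorSpan ℝ (Set.range z))
          rw [finrank_euclideanSpace_fin] at h2
          omega
        obtain ⟨e⟩ : Nonempty (ι ↪ Fin (d+1)) :=
          Function.Embedding.nonempty_of_card_le (by simpa using hcard)
        set w' : Fin (d+1) → ℝ := Function.extend e w 0 with hw'def
        set v' : Fin (d+1) → EuclideanSpace ℝ (Fin d) :=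
          Function.extend e z (fun _ => radProj N x₀) with hv'def
        have hnotr : ∀ j : Fin (d+1), j ∉ Finset.univ.image e → ¬∃ i, e i = j := by
          intro j hj hex
          obtain ⟨i, hi⟩ := hex
          exact hj (Finset.mem_image.2 ⟨i, Finset.mem_univ i, hi⟩)
        have hw'sum : ∑ j, w' j = 1 := by
          rw [← Finset.sum_subset (Finset.subset_univ (Finset.univ.image e))
            (fun j _ hj => by
              rw [hw'def, Function.extend_apply' _ _ _ (hnotr j hj)]; rfl)]
          rw [Finset.sum_image (fun a _ b _ h => e.injective h)]
          simp only [hw'def, e.injective.extend_apply]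
          exact hwsum
        have hv'B : ∀ j, v' j ∈ B := by
          intro j
          rcases em (∃ i, e i = j) with ⟨i, rfl⟩ | hj
          · rw [hv'def, e.injective.extend_apply]
            exact hzB (Set.mem_range_self i)
          · rw [hv'def, Function.extend_apply' _ _ _ hj]
            exact hb₀
        have hw'0 : ∀ j, 0 ≤ w' j := by
          intro j
          rcases em (∃ i, e i = j) with ⟨i, rfl⟩ | hj
          · rw [hw'def, e.injective.extend_apply]
            exact (hwpos i).le
          · rw [hw'def, Function.extend_apply' _ _ _ hj]
            exact le_rfl
        have hrepr' : ∑ j, w' j • v' j = p := by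
          rw [← Finset.sum_subset (Finset.subset_univ (Finset.univ.image e))
            (fun j _ hj => by
              rw [hw'def, Function.extend_apply' _ _ _ (hnotr j hj)]
              simp)]
          rw [Finset.sum_image (fun a _ b _ h => e.injective h)]
          simp only [hw'def, hv'def, e.injective.extend_apply]
          exact hrepr
        refine ⟨(w', v'), Set.mem_prod.2 ⟨⟨hw'0, hw'sum⟩, ?_⟩, hrepr'⟩
        exact Set.mem_univ_pi.2 hv'B
      have h0img : (0 : EuclideanSpace ℝ (Fin d)) ∉ φ '' A := by
        rintro ⟨⟨w, v⟩, hmem, h0⟩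
        rw [Set.mem_prod] at hmem
        obtain ⟨hw, hv⟩ := hmem
        have hvB : ∀ j, v j ∈ B := fun j => hv j (Set.mem_univ j)
        have hsum1 : ∑ i, w i = 1 := hw.2
        obtain ⟨j, -, hj⟩ := Finset.exists_ne_zero_of_sum_ne_zero
          (s := Finset.univ) (f := w) (by rw [hsum1]; exact one_ne_zero)
        have hwj : 0 < w j := lt_of_le_of_ne (hw.1 j) (Ne.symm hj)
        have hs : ∑ i ∈ Finset.univ.erase j, w i • v i ∈ K := by
          apply Finset.sum_induction _ (· ∈ K) (fun a b ha hb => hKadd a ha b hb) h0K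
          intro i _
          exact hKsmul (w i) (hw.1 i) _ (hvB i).1
        have hadd := Finset.add_sum_erase Finset.univ (fun i => w i • v i)
          (Finset.mem_univ j)
        have h0' : ∑ i, w i • v i = 0 := h0
        have heq : w j • v j + ∑ i ∈ Finset.univ.erase j, w i • v i = 0 := by
          rw [hadd]; exact h0'
        have hKm : w j • v j ∈ K := hK (w j) hwj _ (hvB j).1
        have hnegm : w j • v j ∈ -K := by
          rw [Set.mem_neg, neg_eq_of_add_eq_zero_right heq]
          exact hs
        have hz0 := hptd ⟨hKm, hnegm⟩
        rw [Set.mem_singleton_iff] at hz0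
        rcases smul_eq_zero.1 hz0 with h | h
        · exact hj h
        · have h1 := (hvB j).2
          rw [h, (hN0 0).2 rfl] at h1
          exact zero_ne_one h1
      have hCsub : closure (convexHull ℝ B) ⊆ φ '' A :=
        closure_minimal hhull himg.isClosed
      have hCK : closure (convexHull ℝ B) ⊆ K :=
        closure_minimal (convexHull_min hBK hKconv) hKc
      have hρx : radProj N x ∉ closure (convexHull ℝ B) := by
        rcases eq_or_ne x 0 with rfl | hx0
        · rw [radProj, if_pos rfl]
          exact fun h => h0img (hCsub h)
        · have hxK : x ∉ K := fun h => hxS ⟨h, hx0⟩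
          intro h
          apply hxK
          have h1 : radProj N x ∈ K := hCK h
          have h2 : x = (N x) • radProj N x := by
            rw [radProj, if_neg hx0, smul_smul,
              mul_inv_cancel₀ (ne_of_gt (hNpos x hx0)), one_smul]
          rw [h2]
          exact hK (N x) (hNpos x hx0) _ h1
      obtain ⟨f, u, hfu, huf⟩ := geometric_hahn_banach_closed_point
        (convex_convexHull ℝ B).closure isClosed_closure hρx
      set y₀ := (InnerProductSpace.toDual ℝ (EuclideanSpace ℝ (Fin d))).symm f with hy₀def
      have hy₀ : ∀ v : EuclideanSpace ℝ (Fin d), (inner ℝ y₀ v : ℝ) = f v := fun v =>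
        InnerProductSpace.toDual_symm_apply
      have hBle : ∀ b ∈ B, f b ≤ u := fun b hb =>
        (hfu b (subset_closure (subset_convexHull ℝ B hb))).le
      have hconj : ∀ t : ℝ, 0 < t →
          capraConj N (ind S) (t • y₀) ≤ ((t * u : ℝ) : EReal) := by
        intro t ht
        apply iSup_le
        intro z
        by_cases hz : z ∈ S
        · have hρz : radProj N z ∈ B := ⟨(hρS z hz).1, (hρS z hz).2⟩
          have hip : (inner ℝ (radProj N z) (t • y₀) : ℝ) = t * f (radProj N z) := by
            rw [real_inner_smul_right, real_inner_comm, hy₀]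
          have hle : t * f (radProj N z) ≤ t * u :=
            mul_le_mul_of_nonneg_left (hBle _ hρz) ht.le
          simp only [ind, hz, if_true, hip]
          rw [sub_zero]
          exact_mod_cast hle
        · simp only [ind, hz, if_false, EReal.sub_top]
          exact bot_le
      symm
      rw [EReal.eq_top_iff_forall_lt]
      intro r
      set δ : ℝ := f (radProj N x) - u with hδdef
      have hδ : 0 < δ := sub_pos.2 huf
      set t : ℝ := (|r| + 1) / δ with htdef
      have ht : 0 < t := div_pos (by positivity) hδ
      have hip : (inner ℝ (radProj N x) (t • y₀) : ℝ) = t * f (radProj N x) := by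
        rw [real_inner_smul_right, real_inner_comm, hy₀]
      have hterm : ((t * δ : ℝ) : EReal) ≤
          ((inner ℝ (radProj N x) (t • y₀) : ℝ) : EReal) - capraConj N (ind S) (t • y₀) := by
        have h1 : ((t * δ : ℝ) : EReal) =
            ((t * f (radProj N x) : ℝ) : EReal) - ((t * u : ℝ) : EReal) := by
          rw [← EReal.coe_sub]
          norm_cast
          rw [hδdef]; ring
        rw [h1, hip]
        exact EReal.sub_le_sub le_rfl (hconj t ht)
      have htδ : r < t * δ := by
        rw [htdef, div_mul_cancel₀ _ (ne_of_gt hδ)]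
        calc r ≤ |r| := le_abs_self r
          _ < |r| + 1 := by linarith
      calc (r : EReal) < ((t * δ : ℝ) : EReal) := by exact_mod_cast htδ
        _ ≤ ((inner ℝ (radProj N x) (t • y₀) : ℝ) : EReal) - capraConj N (ind S) (t • y₀) :=
            hterm
        _ ≤ capraBiconj N (ind S) x := by
            rw [capraBiconj]
            exact le_iSup (fun y => ((inner ℝ (radProj N x) y : ℝ) : EReal) -
              capraConj N (ind S) y) (t • y₀)
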